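/- Let T > 0 and 0 < a ≤ b, and let l(t,x) = λ(x² + t²(t−T)²). There exist constants C > 0 and λ₀ > 0, depending only on a, b, T, such that for all λ ≥ λ₀ and all (t,x) ∈ [0,T] × [a,b]: 2304 λ⁵ x⁴ − 768 λ⁴ x² + 192 λ³ x + 320 λ³ − 12 l_tt(t,x) l_x(t,x)² ≥ C λ⁵. -/

import Mathlib

/-- Partial derivative in the time variable (first argument). -/
noncomputable def pt (y : ℝ → ℝ → ℝ) : ℝ → ℝ → ℝ := fun t x => deriv (fun s => y s x) t

/-- Partial derivative in the space variable (second argument). -/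
noncomputable def px (y : ℝ → ℝ → ℝ) : ℝ → ℝ → ℝ := fun t x => deriv (fun z => y t z) x

/-- The Carleman weight exponent `l(t,x) = λ (x² + t² (t−T)²)`. -/
noncomputable def lw (lam T : ℝ) : ℝ → ℝ → ℝ := fun t x => lam * (x^2 + t^2 * (t - T)^2)

noncomputable def l_t (lam T : ℝ) : ℝ → ℝ → ℝ := pt (lw lam T)
noncomputable def l_tt (lam T : ℝ) : ℝ → ℝ → ℝ := pt (pt (lw lam T))
noncomputable def l_x (lam T : ℝ) : ℝ → ℝ → ℝ := px (lw lam T)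
noncomputable def l_xx (lam T : ℝ) : ℝ → ℝ → ℝ := px (px (lw lam T))

lemma lx_eq (lam T t x : ℝ) : l_x lam T t x = 2 * lam * x := by
  have h : HasDerivAt (fun z : ℝ => lam * (z^2 + t^2 * (t - T)^2)) (2 * lam * x) x := by
    have h2 := ((hasDerivAt_pow 2 x).const_mul lam).add_const (lam * (t^2 * (t - T)^2))
    have hfe : (fun z : ℝ => lam * (z^2 + t^2 * (t - T)^2))
        = fun z : ℝ => lam * z^2 + lam * (t^2 * (t - T)^2) := by
      funext z; ring
    rw [hfe]
    refine h2.congr_deriv ?_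
    push_cast; ring
  simp [l_x, px, lw, h.deriv]

lemma pt_lw_eq (lam T t x : ℝ) :
    pt (lw lam T) t x = lam * (4 * t^3 - 6 * T * t^2 + 2 * T^2 * t) := by
  have h : HasDerivAt (fun s : ℝ => lam * (x^2 + s^2 * (s - T)^2))
      (lam * (4 * t^3 - 6 * T * t^2 + 2 * T^2 * t)) t := by
    have h4 := ((hasDerivAt_pow 4 t).const_mul lam).const_add (lam * x^2)
    have h3 := (hasDerivAt_pow 3 t).const_mul (2 * lam * T)
    have h2 := (hasDerivAt_pow 2 t).const_mul (lam * T^2)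
    have h := (h4.sub h3).add h2
    have hfe : (fun s : ℝ => lam * (x^2 + s^2 * (s - T)^2))
        = fun s : ℝ => lam * x^2 + lam * s^4 - 2 * lam * T * s^3 + lam * T^2 * s^2 := by
      funext s; ring
    rw [hfe]
    refine h.congr_deriv ?_
    push_cast; ring
  simp only [pt, lw]
  exact h.deriv

lemma ltt_eq (lam T t x : ℝ) :
    l_tt lam T t x = lam * (12 * t^2 - 12 * T * t + 2 * T^2) := by
  have hfe : (fun s : ℝ => pt (lw lam T) s x)
      = fun s : ℝ => lam * (4 * s^3 - 6 * T * s^2 + 2 * T^2 * s) := by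
    funext s; exact pt_lw_eq lam T s x
  have h : HasDerivAt (fun s : ℝ => lam * (4 * s^3 - 6 * T * s^2 + 2 * T^2 * s))
      (lam * (12 * t^2 - 12 * T * t + 2 * T^2)) t := by
    have h3 := (hasDerivAt_pow 3 t).const_mul (4 * lam)
    have h2 := (hasDerivAt_pow 2 t).const_mul (6 * lam * T)
    have h1 := (hasDerivAt_pow 1 t).const_mul (2 * lam * T^2)
    have h := (h3.sub h2).add h1
    have hfe2 : (fun s : ℝ => lam * (4 * s^3 - 6 * T * s^2 + 2 * T^2 * s))
        = fun s : ℝ => 4 * lam * s^3 - 6 * lam * T * s^2 + 2 * lam * T^2 * s^1 := by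
      funext s; ring
    rw [hfe2]
    refine h.congr_deriv ?_
    push_cast; ring
  simp only [l_tt, pt]
  rw [show (fun s => deriv (fun s_1 => lw lam T s_1 x) s) = fun s : ℝ => pt (lw lam T) s x from rfl,
    hfe]
  exact h.deriv

/-- The coefficient `H₃ = F₃ − 12 l_tt l_x²` of `(∂ₓu)²` in the Carleman
estimate is bounded below by `C λ⁵` on `[0,T] × [a,b]` for `λ` large. -/
theorem coefficient_bound_H3 (T a b : ℝ) (hT : 0 < T) (ha : 0 < a) (hab : a ≤ b) :
    ∃ C > (0:ℝ), ∃ lam₀ > (0:ℝ), ∀ lam ≥ lam₀,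
      ∀ t ∈ Set.Icc (0:ℝ) T, ∀ x ∈ Set.Icc a b,
        2304 * lam^5 * x^4 - 768 * lam^4 * x^2 + 192 * lam^3 * x + 320 * lam^3
            - 12 * l_tt lam T t x * (l_x lam T t x)^2
          ≥ C * lam^5 := by
  have ha4 : (0:ℝ) < a^4 := by positivity
  refine ⟨1152 * a^4, by positivity,
    max 1 ((768 * b^2 + 1248 * b^2 * T^2) / (1152 * a^4)), lt_of_lt_of_le one_pos (le_max_left _ _),
    ?_⟩
  intro lam hlam t ht x hx
  obtain ⟨ht0, htT⟩ := ht
  obtain ⟨hax, hxb⟩ := hx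
  have hl1 : (1:ℝ) ≤ lam := le_trans (le_max_left _ _) hlam
  have hlpos : (0:ℝ) < lam := lt_of_lt_of_le one_pos hl1
  have hl2 : 768 * b^2 + 1248 * b^2 * T^2 ≤ 1152 * a^4 * lam := by
    have := le_trans (le_max_right 1 ((768 * b^2 + 1248 * b^2 * T^2) / (1152 * a^4))) hlam
    calc 768 * b^2 + 1248 * b^2 * T^2
        = (768 * b^2 + 1248 * b^2 * T^2) / (1152 * a^4) * (1152 * a^4) := by
          field_simp
      _ ≤ lam * (1152 * a^4) := by
          apply mul_le_mul_of_nonneg_right this (by positivity)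
      _ = 1152 * a^4 * lam := by ring
  rw [ltt_eq, lx_eq]
  have hxpos : 0 < x := lt_of_lt_of_le ha hax
  have key : 12 * (lam * (12 * t^2 - 12 * T * t + 2 * T^2)) * (2 * lam * x)^2
      = 96 * lam^3 * x^2 * (6 * t^2 - 6 * T * t + T^2) := by ring
  rw [key]
  have h1 : 2304 * lam^5 * a^4 ≤ 2304 * lam^5 * x^4 := by
    gcongr
  have h2 : 768 * lam^4 * x^2 ≤ 768 * lam^4 * b^2 := by
    gcongr
  have hq : 6 * t^2 - 6 * T * t + T^2 ≤ 7 * T^2 := by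
    nlinarith [mul_nonneg ht0 (sub_nonneg.2 htT)]
  have h3 : 96 * lam^3 * x^2 * (6 * t^2 - 6 * T * t + T^2) ≤ 672 * lam^4 * b^2 * T^2 := by
    have s1 : 96 * lam^3 * x^2 * (6 * t^2 - 6 * T * t + T^2) ≤ 96 * lam^3 * x^2 * (7 * T^2) := by
      apply mul_le_mul_of_nonneg_left hq (by positivity)
    have s2 : 96 * lam^3 * x^2 * (7 * T^2) ≤ 96 * lam^3 * b^2 * (7 * T^2) := by
      gcongr
    have s3 : 96 * lam^3 * b^2 * (7 * T^2) ≤ 96 * lam^4 * b^2 * (7 * T^2) := by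
      have h34 : lam^3 ≤ lam^4 := pow_le_pow_right₀ hl1 (by norm_num)
      nlinarith [mul_nonneg (mul_nonneg (sub_nonneg.2 h34) (sq_nonneg b)) (sq_nonneg T)]
    nlinarith [s1, s2, s3]
  have h4 : 768 * lam^4 * b^2 + 672 * lam^4 * b^2 * T^2 ≤ 1152 * lam^5 * a^4 := by
    have hl4 : (0:ℝ) < lam^4 := by positivity
    have := mul_le_mul_of_nonneg_left hl2 hl4.le
    nlinarith [mul_nonneg (mul_nonneg hl4.le (sq_nonneg b)) (sq_nonneg T)]
  have h5 : 0 ≤ 192 * lam^3 * x := by positivity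
  have h6 : 0 ≤ 320 * lam^3 := by positivity
  linarith [h1, h2, h3, h4, h5, h6]
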